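/- Let n ≥ 3, x > 0, 1 ≤ k < l ≤ n, and let D = diag(d_1,…,d_n) be a positive diagonal matrix. Let A = D S_{n,k,l}(x) D^{-1}. Then a positive vector w ∈ R^n is efficient for A if and only if either w_l/d_l ≤ w_i/d_i ≤ w_k/d_k ≤ (w_l/d_l)·x for all i ∈ {1,…,n} with i ≠ k, l, or w_l/d_l ≥ w_i/d_i ≥ w_k/d_k ≥ (w_l/d_l)·x for all i ∈ {1,…,n} with i ≠ k, l. -/

import Mathlib

def PosVec {ι : Type*} (w : ι → ℝ) : Prop := ∀ i, 0 < w i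

def IsReciprocal {ι : Type*} (A : Matrix ι ι ℝ) : Prop :=
  (∀ i j, 0 < A i j) ∧ ∀ i j, A j i = 1 / A i j

def IsEfficient {ι : Type*} (A : Matrix ι ι ℝ) (w : ι → ℝ) : Prop :=
  PosVec w ∧ ∀ v : ι → ℝ, PosVec v →
    (∀ i j, |A i j - v i / v j| ≤ |A i j - w i / w j|) →
    ∃ c : ℝ, 0 < c ∧ v = c • w

/-- The simple perturbed consistent matrix `S_{n,k,l}(x)`: all entries `1` except the `(k,l)`
entry, which is `x`, and the `(l,k)` entry, which is `1/x`. -/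
noncomputable def Spert {n : ℕ} (k l : Fin n) (x : ℝ) : Matrix (Fin n) (Fin n) ℝ :=
  Matrix.of fun i j => if i = k ∧ j = l then x else if i = l ∧ j = k then 1 / x else 1

lemma le_of_abs_dom_left {a r s : ℝ} (h : |a - r| ≤ |a - s|) (hsa : s ≤ a) : s ≤ r := by
  have h1 : a - r ≤ |a - r| := le_abs_self _
  have h2 : |a - s| = a - s := abs_of_nonneg (by linarith)
  linarith

lemma le_of_abs_dom_right {a r s : ℝ} (h : |a - r| ≤ |a - s|) (has : a ≤ s) : r ≤ s := by
  have h1 : r - a ≤ |a - r| := by rw [abs_sub_comm]; exact le_abs_self _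
  have h2 : |a - s| = s - a := by rw [abs_sub_comm]; exact abs_of_nonneg (by linarith)
  linarith

lemma between_abs {a r r' : ℝ} (h1 : min a r ≤ r') (h2 : r' ≤ max a r) :
    |a - r'| ≤ |a - r| := by
  rcases le_total a r with h | h
  · rw [min_eq_left h] at h1; rw [max_eq_right h] at h2
    rw [abs_of_nonpos (by linarith), abs_of_nonpos (by linarith)]; linarith
  · rw [min_eq_right h] at h1; rw [max_eq_left h] at h2
    rw [abs_of_nonneg (by linarith), abs_of_nonneg (by linarith)]; linarith

lemma prod_eq {a b a' b' : ℝ} (ha : 0 < a) (hb : 0 < b) (ha' : 0 < a') (hb' : 0 < b')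
    (h1 : a ≤ a') (h2 : b ≤ b') (h3 : a' * b' ≤ a * b) : a = a' ∧ b = b' := by
  constructor <;> nlinarith

lemma exists_middle {n : ℕ} (hn : 3 ≤ n) (k l : Fin n) : ∃ i : Fin n, i ≠ k ∧ i ≠ l := by
  by_contra h
  push_neg at h
  have hsub : (Finset.univ : Finset (Fin n)) ⊆ {k, l} := by
    intro i _
    simp only [Finset.mem_insert, Finset.mem_singleton]
    by_cases hik : i = k
    · exact Or.inl hik
    · exact Or.inr (h i hik)
  have h1 := Finset.card_le_card hsub
  have h2 : ({k, l} : Finset (Fin n)).card ≤ 2 :=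
    (Finset.card_insert_le _ _).trans (by simp)
  rw [Finset.card_univ, Fintype.card_fin] at h1
  omega

lemma Spert_kl {n : ℕ} (k l : Fin n) (x : ℝ) : Spert k l x k l = x := by
  simp [Spert]

lemma Spert_other {n : ℕ} (k l : Fin n) (x : ℝ) {i j : Fin n}
    (h : ¬(i = k ∧ j = l)) (h' : ¬(i = l ∧ j = k)) : Spert k l x i j = 1 := by
  simp only [Spert, Matrix.of_apply, if_neg h, if_neg h']

lemma Spert_lk {n : ℕ} {k l : Fin n} (hkl : k ≠ l) (x : ℝ) : Spert k l x l k = 1 / x := by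
  simp only [Spert, Matrix.of_apply]
  rw [if_neg (fun h : l = k ∧ k = l => hkl h.2)]
  simp

lemma eff_of_C1 {n : ℕ} (hn : 3 ≤ n) {x : ℝ} (hx : 0 < x) {k l : Fin n} (hkl : k ≠ l)
    (u : Fin n → ℝ) (hu : PosVec u)
    (h1 : ∀ i, i ≠ k → i ≠ l → u l ≤ u i ∧ u i ≤ u k)
    (h2 : u k ≤ u l * x) :
    IsEfficient (Spert k l x) u := by
  obtain ⟨i0, hi0k, hi0l⟩ := exists_middle hn k l
  refine ⟨hu, fun v hv hdom => ?_⟩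
  have fA : u k / u l ≤ v k / v l := by
    have hd := hdom k l
    rw [Spert_kl] at hd
    exact le_of_abs_dom_left hd ((div_le_iff₀ (hu l)).mpr (by linarith))
  have fB : ∀ i, i ≠ k → i ≠ l → v i / v l ≤ u i / u l := by
    intro i hik hil
    have hd := hdom i l
    rw [Spert_other k l x (fun h => hik h.1) (fun h => hil h.1)] at hd
    exact le_of_abs_dom_right hd ((one_le_div (hu l)).mpr (h1 i hik hil).1)
  have fC : ∀ i, i ≠ k → i ≠ l → v k / v i ≤ u k / u i := by
    intro i hik hil
    have hd := hdom k i
    rw [Spert_other k l x (fun h => hil h.2) (fun h => hkl h.1)] at hd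
    exact le_of_abs_dom_right hd ((one_le_div (hu i)).mpr (h1 i hik hil).2)
  have fD : ∀ i, i ≠ k → i ≠ l → v i / v l = u i / u l ∧ v k / v i = u k / u i := by
    intro i hik hil
    have hvi := ne_of_gt (hv i)
    have hvl := ne_of_gt (hv l)
    have hui := ne_of_gt (hu i)
    have hul := ne_of_gt (hu l)
    have key : v k / v i * (v i / v l) = v k / v l := by field_simp
    have key2 : u k / u i * (u i / u l) = u k / u l := by field_simp
    have h3 : u k / u i * (u i / u l) ≤ v k / v i * (v i / v l) := by
      rw [key, key2]; exact fA
    have := prod_eq (div_pos (hv k) (hv i)) (div_pos (hv i) (hv l))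
      (div_pos (hu k) (hu i)) (div_pos (hu i) (hu l))
      (fC i hik hil) (fB i hik hil) h3
    exact ⟨this.2, this.1⟩
  refine ⟨v l / u l, div_pos (hv l) (hu l), ?_⟩
  funext i
  simp only [Pi.smul_apply, smul_eq_mul]
  have hul := ne_of_gt (hu l)
  have hvl := ne_of_gt (hv l)
  have ratio_eq : ∀ j : Fin n, v j / v l = u j / u l → v j = v l / u l * u j := by
    intro j h
    have := (div_eq_div_iff hvl hul).mp h
    rw [div_mul_eq_mul_div, eq_div_iff hul]
    linarith
  by_cases hil : i = l
  · subst hil; field_simp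
  by_cases hik : i = k
  · subst hik
    apply ratio_eq
    have e1 := (fD i0 hi0k hi0l).1
    have e2 := (fD i0 hi0k hi0l).2
    have hvi0 := ne_of_gt (hv i0)
    have hui0 := ne_of_gt (hu i0)
    have key : v i / v i0 * (v i0 / v l) = v i / v l := by field_simp
    have key2 : u i / u i0 * (u i0 / u l) = u i / u l := by field_simp
    rw [← key, ← key2, e1, e2]
  · exact ratio_eq i (fD i hik hil).1

lemma eff_of_C2 {n : ℕ} (hn : 3 ≤ n) {x : ℝ} (hx : 0 < x) {k l : Fin n} (hkl : k ≠ l)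
    (u : Fin n → ℝ) (hu : PosVec u)
    (h1 : ∀ i, i ≠ k → i ≠ l → u l ≥ u i ∧ u i ≥ u k)
    (h2 : u k ≥ u l * x) :
    IsEfficient (Spert k l x) u := by
  obtain ⟨i0, hi0k, hi0l⟩ := exists_middle hn k l
  refine ⟨hu, fun v hv hdom => ?_⟩
  have fA : v k / v l ≤ u k / u l := by
    have hd := hdom k l
    rw [Spert_kl] at hd
    exact le_of_abs_dom_right hd ((le_div_iff₀ (hu l)).mpr (by linarith))
  have fB : ∀ i, i ≠ k → i ≠ l → u i / u l ≤ v i / v l := by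
    intro i hik hil
    have hd := hdom i l
    rw [Spert_other k l x (fun h => hik h.1) (fun h => hil h.1)] at hd
    exact le_of_abs_dom_left hd ((div_le_one (hu l)).mpr (h1 i hik hil).1)
  have fC : ∀ i, i ≠ k → i ≠ l → u k / u i ≤ v k / v i := by
    intro i hik hil
    have hd := hdom k i
    rw [Spert_other k l x (fun h => hil h.2) (fun h => hkl h.1)] at hd
    exact le_of_abs_dom_left hd ((div_le_one (hu i)).mpr (h1 i hik hil).2)
  have fD : ∀ i, i ≠ k → i ≠ l → v i / v l = u i / u l ∧ v k / v i = u k / u i := by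
    intro i hik hil
    have hvi := ne_of_gt (hv i)
    have hvl := ne_of_gt (hv l)
    have hui := ne_of_gt (hu i)
    have hul := ne_of_gt (hu l)
    have key : v k / v i * (v i / v l) = v k / v l := by field_simp
    have key2 : u k / u i * (u i / u l) = u k / u l := by field_simp
    have h3 : v k / v i * (v i / v l) ≤ u k / u i * (u i / u l) := by
      rw [key, key2]; exact fA
    have := prod_eq (div_pos (hu k) (hu i)) (div_pos (hu i) (hu l))
      (div_pos (hv k) (hv i)) (div_pos (hv i) (hv l))
      (fC i hik hil) (fB i hik hil) h3
    exact ⟨this.2.symm, this.1.symm⟩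
  refine ⟨v l / u l, div_pos (hv l) (hu l), ?_⟩
  funext i
  simp only [Pi.smul_apply, smul_eq_mul]
  have hul := ne_of_gt (hu l)
  have hvl := ne_of_gt (hv l)
  have ratio_eq : ∀ j : Fin n, v j / v l = u j / u l → v j = v l / u l * u j := by
    intro j h
    have := (div_eq_div_iff hvl hul).mp h
    rw [div_mul_eq_mul_div, eq_div_iff hul]
    linarith
  by_cases hil : i = l
  · subst hil; field_simp
  by_cases hik : i = k
  · subst hik
    apply ratio_eq
    have e1 := (fD i0 hi0k hi0l).1
    have e2 := (fD i0 hi0k hi0l).2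
    have hvi0 := ne_of_gt (hv i0)
    have hui0 := ne_of_gt (hu i0)
    have key : v i / v i0 * (v i0 / v l) = v i / v l := by field_simp
    have key2 : u i / u i0 * (u i0 / u l) = u i / u l := by field_simp
    rw [← key, ← key2, e1, e2]
  · exact ratio_eq i (fD i hik hil).1
lemma not_eff_down {n : ℕ} {x : ℝ} (hx : 0 < x) {k l : Fin n} (hkl : k ≠ l)
    {u : Fin n → ℝ} (hu : PosVec u) {M : ℝ}
    (hM : ∀ i, u i ≤ M) (hMmem : ∃ i, u i = M)
    (hl : u l < M) (hk : u k = M → x * u l < M) :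
    ¬ IsEfficient (Spert k l x) u := by
  classical
  have hM0 : 0 < M := lt_trans (hu l) hl
  set s : Finset (Fin n) := Finset.univ.filter (fun j => u j ≠ M) with hs
  have hls : l ∈ s := by simp [hs, ne_of_lt hl]
  have hsne : s.Nonempty := ⟨l, hls⟩
  set N : ℝ := s.sup' hsne u with hN
  have hNM : N < M := by
    rw [Finset.sup'_lt_iff]
    intro j hj
    refine lt_of_le_of_ne (hM j) ?_
    simp only [hs, Finset.mem_filter] at hj
    exact hj.2
  have hle : ∀ i, u i ≠ M → u i ≤ N := fun i h =>
    Finset.le_sup' u (by simp [hs, h])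
  have hNl : u l ≤ N := hle l (ne_of_lt hl)
  have hN0 : 0 < N := lt_of_lt_of_le (hu l) hNl
  set ε : ℝ := if u k = M then min (M - N) (M - x * u l) else M - N with hε
  have hε0 : 0 < ε := by
    rw [hε]; split
    · exact lt_min (by linarith) (by linarith [hk ‹_›])
    · linarith
  have hεN : ε ≤ M - N := by
    rw [hε]; split
    · exact min_le_left _ _
    · exact le_refl _
  have hεk : u k = M → ε ≤ M - x * u l := by
    intro h; rw [hε, if_pos h]; exact min_le_right _ _
  set v : Fin n → ℝ := fun i => if u i = M then M - ε else u i with hv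
  have hvpos : PosVec v := by
    intro i; rw [hv]; dsimp only; split
    · linarith
    · exact hu i
  have hdom : ∀ i j, |Spert k l x i j - v i / v j| ≤ |Spert k l x i j - u i / u j| := by
    intro i j
    by_cases hi : u i = M <;> by_cases hj : u j = M
    · have e1 : v i = M - ε := by rw [hv]; simp [hi]
      have e2 : v j = M - ε := by rw [hv]; simp [hj]
      rw [e1, e2, hi, hj, div_self (by linarith : M - ε ≠ 0),
        div_self (ne_of_gt hM0)]
    · have e1 : v i = M - ε := by rw [hv]; simp [hi]
      have e2 : v j = u j := by rw [hv]; simp [hj]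
      rw [e1, e2, hi]
      have huj := hu j
      have hujN : u j ≤ N := hle j hj
      by_cases hij : i = k ∧ j = l
      · have hSij : Spert k l x i j = x := by rw [hij.1, hij.2]; exact Spert_kl k l x
        have hkM : u k = M := hij.1 ▸ hi
        have hxl : x * u l < M := hk hkM
        have hεx : ε ≤ M - x * u l := hεk hkM
        rw [hSij, hij.2]
        apply between_abs
        · exact le_trans (min_le_left _ _) ((le_div_iff₀ (hu l)).mpr (by linarith))
        · refine le_trans ?_ (le_max_right _ _)
          rw [div_le_div_iff₀ (hu l) (hu l)]
          nlinarith [hu l]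
      · have hSij : Spert k l x i j = 1 := by
          refine Spert_other k l x hij (fun h => ?_)
          rw [h.1] at hi; exact absurd hi (ne_of_lt hl)
        rw [hSij]
        apply between_abs
        · exact le_trans (min_le_left _ _) ((one_le_div huj).mpr (by linarith))
        · refine le_trans ?_ (le_max_right _ _)
          rw [div_le_div_iff₀ huj huj]
          nlinarith
    · have e1 : v i = u i := by rw [hv]; simp [hi]
      have e2 : v j = M - ε := by rw [hv]; simp [hj]
      rw [e1, e2, hj]
      have hui := hu i
      have huiN : u i ≤ N := hle i hi
      by_cases hij : i = l ∧ j = k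
      · have hSij : Spert k l x i j = 1 / x := by rw [hij.1, hij.2]; exact Spert_lk hkl x
        have hkM : u k = M := hij.2 ▸ hj
        have hxl : x * u l < M := hk hkM
        have hεx : ε ≤ M - x * u l := hεk hkM
        rw [hSij, hij.1]
        apply between_abs
        · refine le_trans (min_le_right _ _) ?_
          rw [div_le_div_iff₀ hM0 (by linarith)]
          nlinarith [hu l]
        · refine le_trans ?_ (le_max_left _ _)
          rw [div_le_div_iff₀ (by linarith) hx]
          linarith
      · have hSij : Spert k l x i j = 1 := by
          refine Spert_other k l x (fun h => ?_) hij
          rw [h.2] at hj; exact absurd hj (ne_of_lt hl)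
        rw [hSij]
        apply between_abs
        · refine le_trans (min_le_right _ _) ?_
          rw [div_le_div_iff₀ hM0 (by linarith)]
          nlinarith
        · refine le_trans ?_ (le_max_left _ _)
          rw [div_le_one (by linarith)]
          linarith
    · have e1 : v i = u i := by rw [hv]; simp [hi]
      have e2 : v j = u j := by rw [hv]; simp [hj]
      rw [e1, e2]
  rintro ⟨_, hEff⟩
  obtain ⟨c, hc, hvc⟩ := hEff v hvpos hdom
  obtain ⟨i0, hi0⟩ := hMmem
  have hbl : v l = c * u l := by rw [hvc]; rfl
  have hbi : v i0 = c * u i0 := by rw [hvc]; rfl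
  have e1 : v l = u l := by rw [hv]; simp [ne_of_lt hl]
  have e2 : v i0 = M - ε := by rw [hv]; simp [hi0]
  have hc1 : c = 1 := by
    have := hu l
    rw [e1] at hbl
    nlinarith
  rw [hc1, e2, hi0] at hbi
  linarith
lemma not_eff_up {n : ℕ} {x : ℝ} (hx : 0 < x) {k l : Fin n} (hkl : k ≠ l)
    {u : Fin n → ℝ} (hu : PosVec u) {m : ℝ}
    (hm : ∀ i, m ≤ u i) (hmmem : ∃ i, u i = m)
    (hl : m < u l) (hk : u k = m → m < x * u l) :
    ¬ IsEfficient (Spert k l x) u := by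
  classical
  have hm0 : 0 < m := by obtain ⟨i0, hi0⟩ := hmmem; rw [← hi0]; exact hu i0
  set s : Finset (Fin n) := Finset.univ.filter (fun j => u j ≠ m) with hs
  have hls : l ∈ s := by simp [hs, (ne_of_gt hl : u l ≠ m)]
  have hsne : s.Nonempty := ⟨l, hls⟩
  set N : ℝ := s.inf' hsne u with hN
  have hNm : m < N := by
    rw [Finset.lt_inf'_iff]
    intro j hj
    refine lt_of_le_of_ne (hm j) ?_
    simp only [hs, Finset.mem_filter] at hj
    exact fun h => hj.2 h.symm
  have hge : ∀ i, u i ≠ m → N ≤ u i := fun i h =>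
    Finset.inf'_le u (by simp [hs, h])
  have hNl : N ≤ u l := hge l (ne_of_gt hl)
  set ε : ℝ := if u k = m then min (N - m) (x * u l - m) else N - m with hε
  have hε0 : 0 < ε := by
    rw [hε]; split
    · exact lt_min (by linarith) (by linarith [hk ‹_›])
    · linarith
  have hεN : ε ≤ N - m := by
    rw [hε]; split
    · exact min_le_left _ _
    · exact le_refl _
  have hεk : u k = m → ε ≤ x * u l - m := by
    intro h; rw [hε, if_pos h]; exact min_le_right _ _
  set v : Fin n → ℝ := fun i => if u i = m then m + ε else u i with hv
  have hvpos : PosVec v := by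
    intro i; rw [hv]; dsimp only; split
    · linarith
    · exact hu i
  have hdom : ∀ i j, |Spert k l x i j - v i / v j| ≤ |Spert k l x i j - u i / u j| := by
    intro i j
    by_cases hi : u i = m <;> by_cases hj : u j = m
    · have e1 : v i = m + ε := by rw [hv]; simp [hi]
      have e2 : v j = m + ε := by rw [hv]; simp [hj]
      rw [e1, e2, hi, hj, div_self (by linarith : m + ε ≠ 0),
        div_self (ne_of_gt hm0)]
    · have e1 : v i = m + ε := by rw [hv]; simp [hi]
      have e2 : v j = u j := by rw [hv]; simp [hj]
      rw [e1, e2, hi]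
      have huj := hu j
      have hujN : N ≤ u j := hge j hj
      by_cases hij : i = k ∧ j = l
      · have hSij : Spert k l x i j = x := by rw [hij.1, hij.2]; exact Spert_kl k l x
        have hkm : u k = m := hij.1 ▸ hi
        have hxl : m < x * u l := hk hkm
        have hεx : ε ≤ x * u l - m := hεk hkm
        rw [hSij, hij.2]
        apply between_abs
        · refine le_trans (min_le_right _ _) ?_
          rw [div_le_div_iff₀ (hu l) (hu l)]
          nlinarith [hu l]
        · refine le_trans ?_ (le_max_left _ _)
          rw [div_le_iff₀ (hu l)]
          linarith
      · have hSij : Spert k l x i j = 1 := by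
          refine Spert_other k l x hij (fun h => ?_)
          rw [h.1] at hi; exact absurd hi (ne_of_gt hl)
        rw [hSij]
        apply between_abs
        · refine le_trans (min_le_right _ _) ?_
          rw [div_le_div_iff₀ huj huj]
          nlinarith
        · refine le_trans ?_ (le_max_left _ _)
          rw [div_le_one huj]
          linarith
    · have e1 : v i = u i := by rw [hv]; simp [hi]
      have e2 : v j = m + ε := by rw [hv]; simp [hj]
      rw [e1, e2, hj]
      have hui := hu i
      have huiN : N ≤ u i := hge i hi
      by_cases hij : i = l ∧ j = k
      · have hSij : Spert k l x i j = 1 / x := by rw [hij.1, hij.2]; exact Spert_lk hkl x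
        have hkm : u k = m := hij.2 ▸ hj
        have hxl : m < x * u l := hk hkm
        have hεx : ε ≤ x * u l - m := hεk hkm
        rw [hSij, hij.1]
        apply between_abs
        · refine le_trans (min_le_left _ _) ?_
          rw [div_le_div_iff₀ hx (by linarith)]
          linarith
        · refine le_trans ?_ (le_max_right _ _)
          rw [div_le_div_iff₀ (by linarith) hm0]
          nlinarith [hu l]
      · have hSij : Spert k l x i j = 1 := by
          refine Spert_other k l x (fun h => ?_) hij
          rw [h.2] at hj; exact absurd hj (ne_of_gt hl)
        rw [hSij]
        apply between_abs
        · refine le_trans (min_le_left _ _) ?_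
          rw [one_le_div (by linarith : (0:ℝ) < m + ε)]
          linarith
        · refine le_trans ?_ (le_max_right _ _)
          rw [div_le_div_iff₀ (by linarith) hm0]
          nlinarith
    · have e1 : v i = u i := by rw [hv]; simp [hi]
      have e2 : v j = u j := by rw [hv]; simp [hj]
      rw [e1, e2]
  rintro ⟨_, hEff⟩
  obtain ⟨c, hc, hvc⟩ := hEff v hvpos hdom
  obtain ⟨i0, hi0⟩ := hmmem
  have hbl : v l = c * u l := by rw [hvc]; rfl
  have hbi : v i0 = c * u i0 := by rw [hvc]; rfl
  have e1 : v l = u l := by rw [hv]; simp [(ne_of_gt hl : u l ≠ m)]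
  have e2 : v i0 = m + ε := by rw [hv]; simp [hi0]
  have hc1 : c = 1 := by
    have := hu l
    rw [e1] at hbl
    nlinarith
  rw [hc1, e2, hi0] at hbi
  linarith
lemma eff_S_iff {n : ℕ} (hn : 3 ≤ n) {x : ℝ} (hx : 0 < x) {k l : Fin n} (hkl : k ≠ l)
    (u : Fin n → ℝ) (hu : PosVec u) :
    IsEfficient (Spert k l x) u ↔
      ((∀ i, i ≠ k → i ≠ l → u l ≤ u i ∧ u i ≤ u k) ∧ u k ≤ u l * x) ∨
      ((∀ i, i ≠ k → i ≠ l → u l ≥ u i ∧ u i ≥ u k) ∧ u k ≥ u l * x) := by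
  constructor
  · intro hEff
    by_contra hC
    have hne : (Finset.univ : Finset (Fin n)).Nonempty := ⟨k, Finset.mem_univ k⟩
    set M : ℝ := Finset.univ.sup' hne u with hMdef
    set m : ℝ := Finset.univ.inf' hne u with hmdef
    have hM : ∀ i, u i ≤ M := fun i => Finset.le_sup' u (Finset.mem_univ i)
    have hm : ∀ i, m ≤ u i := fun i => Finset.inf'_le u (Finset.mem_univ i)
    have hMmem : ∃ i, u i = M := by
      obtain ⟨i, _, h⟩ := Finset.exists_mem_eq_sup' hne u; exact ⟨i, h.symm⟩
    have hmmem : ∃ i, u i = m := by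
      obtain ⟨i, _, h⟩ := Finset.exists_mem_eq_inf' hne u; exact ⟨i, h.symm⟩
    rcases eq_or_lt_of_le (hM l) with hlM | hlM
    · -- u l = M
      rcases eq_or_lt_of_le (hm l) with hlm | hlm
      · -- m = u l = M : all coordinates equal
        have hall : ∀ i, u i = u l := fun i =>
          le_antisymm (hlM ▸ hM i) (hlm ▸ hm i)
        apply hC
        rcases le_total 1 x with h | h
        · left
          refine ⟨fun i _ _ => ⟨(hall i).ge, (hall i).le.trans (hall k).ge⟩, ?_⟩
          rw [hall k]
          nlinarith [hu l]
        · right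
          refine ⟨fun i _ _ => ⟨(hall i).le, (hall i).ge.trans' (hall k).le⟩, ?_⟩
          rw [hall k]
          nlinarith [hu l]
      · -- m < u l
        by_cases hkm : u k = m
        · by_cases hxm : m < x * u l
          · exact (not_eff_up hx hkl hu hm hmmem hlm fun _ => hxm) hEff
          · push_neg at hxm
            apply hC; right
            refine ⟨fun i _ _ => ⟨hlM ▸ hM i, hkm ▸ hm i⟩, ?_⟩
            rw [hkm]; linarith
        · exact (not_eff_up hx hkl hu hm hmmem hlm fun h => absurd h hkm) hEff
    · -- u l < M
      by_cases hkM : u k = M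
      · by_cases hxM : x * u l < M
        · exact (not_eff_down hx hkl hu hM hMmem hlM fun _ => hxM) hEff
        · push_neg at hxM
          rcases eq_or_lt_of_le (hm l) with hlm | hlm
          · -- m = u l : C1 holds
            apply hC; left
            refine ⟨fun i _ _ => ⟨hlm ▸ hm i, hkM ▸ hM i⟩, ?_⟩
            rw [hkM]; linarith
          · -- m < u l : up applies, u k = M ≠ m
            have hkm : u k ≠ m := by
              intro h
              rw [hkM] at h
              have : m < M := lt_trans hlm hlM
              linarith [h]
            exact (not_eff_up hx hkl hu hm hmmem hlm fun h => absurd h hkm) hEff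
      · exact (not_eff_down hx hkl hu hM hMmem hlM fun h => absurd h hkM) hEff
  · rintro (⟨h1, h2⟩ | ⟨h1, h2⟩)
    · exact eff_of_C1 hn hx hkl u hu h1 h2
    · exact eff_of_C2 hn hx hkl u hu h1 h2
lemma eff_conj {n : ℕ} (A S : Matrix (Fin n) (Fin n) ℝ) (d : Fin n → ℝ)
    (hd : ∀ i, 0 < d i) (hA : ∀ i j, A i j = d i / d j * S i j) (w : Fin n → ℝ)
    (hw : PosVec w) :
    IsEfficient A w ↔ IsEfficient S (fun i => w i / d i) := by
  have e : ∀ (r : Fin n → ℝ), (∀ i, 0 < r i) → ∀ i j,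
      A i j - r i / r j = d i / d j * (S i j - (r i / d i) / (r j / d j)) := by
    intro r hr i j
    have h1 : d i ≠ 0 := ne_of_gt (hd i)
    have h2 : d j ≠ 0 := ne_of_gt (hd j)
    have h3 : r j ≠ 0 := ne_of_gt (hr j)
    rw [hA]
    field_simp
  constructor
  · rintro ⟨_, hEff⟩
    refine ⟨fun i => div_pos (hw i) (hd i), fun p hp hdom => ?_⟩
    set v : Fin n → ℝ := fun i => d i * p i with hv
    have hvpos : PosVec v := fun i => mul_pos (hd i) (hp i)
    have hvd : ∀ i, v i / d i = p i := fun i => by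
      rw [hv]; exact mul_div_cancel_left₀ _ (ne_of_gt (hd i))
    have hdomA : ∀ i j, |A i j - v i / v j| ≤ |A i j - w i / w j| := by
      intro i j
      rw [e v hvpos i j, e w hw i j, abs_mul, abs_mul, hvd i, hvd j]
      exact mul_le_mul_of_nonneg_left (hdom i j) (abs_nonneg _)
    obtain ⟨c, hc, hvc⟩ := hEff v hvpos hdomA
    refine ⟨c, hc, ?_⟩
    funext i
    have : v i = c * w i := by rw [hvc]; rfl
    have h1 : d i ≠ 0 := ne_of_gt (hd i)
    simp only [Pi.smul_apply, smul_eq_mul]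
    rw [← hvd i, this]
    ring
  · rintro ⟨_, hEff⟩
    refine ⟨hw, fun v hv hdomA => ?_⟩
    set p : Fin n → ℝ := fun i => v i / d i with hp
    have hppos : PosVec p := fun i => div_pos (hv i) (hd i)
    have hdom : ∀ i j, |S i j - p i / p j| ≤ |S i j - (w i / d i) / (w j / d j)| := by
      intro i j
      have := hdomA i j
      rw [e v hv i j, e w hw i j, abs_mul, abs_mul] at this
      have hdij : 0 < |d i / d j| := abs_pos.mpr (ne_of_gt (div_pos (hd i) (hd j)))
      exact le_of_mul_le_mul_left this hdij
    obtain ⟨c, hc, hpc⟩ := hEff p hppos hdom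
    refine ⟨c, hc, ?_⟩
    funext i
    have h1 : p i = c * (w i / d i) := by rw [hpc]; rfl
    have h2 : d i ≠ 0 := ne_of_gt (hd i)
    simp only [Pi.smul_apply, smul_eq_mul]
    have : v i / d i = c * (w i / d i) := h1
    field_simp at this
    linarith



/-- description of the efficient vectors for `A = D S_{n,k,l}(x) D⁻¹`, where `D`
is a positive diagonal matrix. -/
theorem efficient_iff_simple_perturbed {n : ℕ} (hn : 3 ≤ n) (x : ℝ) (hx : 0 < x)
    (k l : Fin n) (hkl : k < l) (d : Fin n → ℝ) (hd : ∀ i, 0 < d i)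
    (A : Matrix (Fin n) (Fin n) ℝ)
    (hA : A = Matrix.diagonal d * Spert k l x * (Matrix.diagonal d)⁻¹)
    (w : Fin n → ℝ) (hw : PosVec w) :
    IsEfficient A w ↔
      (((∀ i, i ≠ k → i ≠ l → w l / d l ≤ w i / d i ∧ w i / d i ≤ w k / d k) ∧
          w k / d k ≤ (w l / d l) * x) ∨
        ((∀ i, i ≠ k → i ≠ l → w l / d l ≥ w i / d i ∧ w i / d i ≥ w k / d k) ∧
          w k / d k ≥ (w l / d l) * x)) := by
  have hdinv : (Matrix.diagonal d)⁻¹ = Matrix.diagonal (fun i => (d i)⁻¹) := by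
    apply Matrix.inv_eq_right_inv
    rw [Matrix.diagonal_mul_diagonal]
    convert Matrix.diagonal_one with i
    exact mul_inv_cancel₀ (ne_of_gt (hd i))
  have hA' : ∀ i j, A i j = d i / d j * Spert k l x i j := by
    intro i j
    rw [hA, hdinv, Matrix.mul_diagonal, Matrix.diagonal_mul]
    rw [div_eq_mul_inv]
    ring
  rw [eff_conj A (Spert k l x) d hd hA' w hw]
  exact eff_S_iff hn hx (ne_of_lt hkl) (fun i => w i / d i)
    (fun i => div_pos (hw i) (hd i))
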